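/- arXiv:2210.03586 — 2 statements merged into one kernel-verified Lean document; each statement's English description precedes it below -/
import Mathlib

section
/- (Proposition 1, construction of minimizers, Ã ⊆ 𝔸.) Let m > 0, let U ∈ ℝ^{d×d} satisfy U Uᵀ = I, let V ∈ ℝ^{m×d} satisfy Vᵀ V = I, and set N := √m · (U Vᵀ), so (1/m) N Nᵀ = I. Let σ : {1,…,d} → ℝ satisfy σᵢ > 0 for all i, and set Z := U · diag(σ₁,…,σ_d) · Vᵀ. Then Σ := (1/m) Z Zᵀ is symmetric positive definite, and the ZCA-whitened output satisfies Σ^{−1/2} Z = N; consequently Z attains the minimum value 0 of the ZCA-based whitening loss ‖Σ^{−1/2} Z − N‖_F² with target N. -/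
open Matrix

/-- The covariance matrix `(1/m) • Z * Zᵀ` of a mini-batch `Z` is positive semidefinite. -/
lemma cov_posSemidef {d m : ℕ} (Z : Matrix (Fin d) (Fin m) ℝ) :
    (((m : ℝ)⁻¹) • (Z * Zᵀ)).PosSemidef := by
  have key : ((m : ℝ)⁻¹) • (Z * Zᵀ)
      = ((Real.sqrt m)⁻¹ • Zᵀ)ᴴ * ((Real.sqrt m)⁻¹ • Zᵀ) := by
    rw [conjTranspose_smul, conjTranspose_eq_transpose_of_trivial, transpose_transpose,
      Matrix.smul_mul, Matrix.mul_smul, smul_smul]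
    congr 1
    rw [star_trivial, ← mul_inv, Real.mul_self_sqrt (Nat.cast_nonneg m)]
  rw [key]
  exact posSemidef_conjTranspose_mul_self _

/-- The positive semidefinite square root of a positive semidefinite matrix (the definition
`Matrix.PosSemidef.sqrt` of the older Mathlib, removed since). -/
noncomputable def Matrix.PosSemidef.sqrt {n 𝕜 : Type*} [Fintype n] [DecidableEq n] [RCLike 𝕜]
    [PartialOrder 𝕜] [StarOrderedRing 𝕜]
    {A : Matrix n n 𝕜} (hA : A.PosSemidef) : Matrix n n 𝕜 :=
  (hA.1.eigenvectorUnitary : Matrix n n 𝕜) *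
    diagonal ((↑) ∘ (Real.sqrt ·) ∘ hA.1.eigenvalues) *
    (star (hA.1.eigenvectorUnitary : Matrix n n 𝕜))

/-- ZCA whitening: `Z ↦ ((1/m) Z Zᵀ)^(-1/2) * Z`, where the inverse square root is the matrix
inverse of the unique positive semidefinite square root of the covariance matrix. -/
noncomputable def zcaWhiten {d m : ℕ} (Z : Matrix (Fin d) (Fin m) ℝ) :
    Matrix (Fin d) (Fin m) ℝ :=
  ((cov_posSemidef Z).sqrt)⁻¹ * Z

/-- Squared Frobenius norm. -/
def frobSq {ι κ : Type*} [Fintype ι] [Fintype κ] (A : Matrix ι κ ℝ) : ℝ :=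
  ∑ i, ∑ j, (A i j) ^ 2


/-- Conjugation by an invertible matrix preserves positive definiteness. -/
lemma conj_posDef {n : ℕ} {A U : Matrix (Fin n) (Fin n) ℝ} (hA : A.PosDef)
    (hU : IsUnit U) : (U * A * Uᵀ).PosDef := by
  rw [posDef_iff_dotProduct_mulVec]
  refine ⟨?_, fun x hx => ?_⟩
  · have h := hA.isHermitian
    rw [IsHermitian, conjTranspose_eq_transpose_of_trivial] at h
    rw [IsHermitian, conjTranspose_eq_transpose_of_trivial]
    simp [transpose_mul, h, Matrix.mul_assoc]
  · have hy : Uᵀ *ᵥ x ≠ 0 := by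
      intro h
      exact hx <| (mulVec_injective_iff_isUnit.2 ((Matrix.isUnit_transpose U).mpr hU))
        (a₁ := x) (a₂ := 0) (by simpa using h)
    have h2 := (posDef_iff_dotProduct_mulVec.mp hA).2 (x := Uᵀ *ᵥ x) hy
    rw [mulVec_transpose] at h2
    have key : ∀ w, (w ᵥ* Uᵀ) ⬝ᵥ x = w ⬝ᵥ (x ᵥ* U) := fun w => by
      rw [← dotProduct_mulVec, mulVec_transpose]
    simp only [star_trivial, dotProduct_mulVec] at h2 ⊢
    rw [vecMul_vecMul] at h2
    rw [← vecMul_vecMul, key]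
    exact h2

/-- Cancel a semi-orthogonal middle factor. -/
lemma sandwich_mul {p q r s : ℕ} (W : Matrix (Fin q) (Fin p) ℝ) (hW : Wᵀ * W = 1)
    (A : Matrix (Fin r) (Fin p) ℝ) (B : Matrix (Fin p) (Fin s) ℝ) :
    (A * Wᵀ) * (W * B) = A * B := by
  rw [Matrix.mul_assoc, ← Matrix.mul_assoc Wᵀ, hW, Matrix.one_mul]

/-- Merge adjacent diagonal factors. -/
lemma diag_absorb {p q : ℕ} (U : Matrix (Fin p) (Fin p) ℝ) (f g : Fin p → ℝ)
    (B : Matrix (Fin p) (Fin q) ℝ) :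
    (U * Matrix.diagonal f) * (Matrix.diagonal g * B)
      = U * Matrix.diagonal (fun i => f i * g i) * B := by
  rw [Matrix.mul_assoc, ← Matrix.mul_assoc (Matrix.diagonal f), diagonal_mul_diagonal,
    ← Matrix.mul_assoc]

/-- Variant of `sandwich_mul` for left-associated products. -/
lemma sandwich_mul' {p q r s t : ℕ} (W : Matrix (Fin q) (Fin p) ℝ) (hW : Wᵀ * W = 1)
    (A : Matrix (Fin r) (Fin p) ℝ) (B : Matrix (Fin p) (Fin s) ℝ)
    (C : Matrix (Fin s) (Fin t) ℝ) :
    (A * Wᵀ) * ((W * B) * C) = A * (B * C) := by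
  rw [Matrix.mul_assoc W B C, sandwich_mul W hW A (B * C)]

/-- Proposition 1 (construction of minimizers, `Ã ⊆ 𝔸`): for orthogonal `U`, semi-orthogonal
`V`, the whitened target `N = √m • (U Vᵀ)`, and any positive `σᵢ`, the matrix
`Z = U diag(σ) Vᵀ` has positive definite covariance, its ZCA-whitened output equals `N`, and
hence `Z` attains the minimum value `0` of the ZCA-based whitening loss with target `N`. -/
theorem constructed_minimizers {d m : ℕ} (hm : 0 < m)
    (U : Matrix (Fin d) (Fin d) ℝ) (hU : U * Uᵀ = 1)
    (V : Matrix (Fin m) (Fin d) ℝ) (hV : Vᵀ * V = 1)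
    (σ : Fin d → ℝ) (hσ : ∀ i, 0 < σ i)
    (N : Matrix (Fin d) (Fin m) ℝ) (hNdef : N = Real.sqrt m • (U * Vᵀ))
    (Z : Matrix (Fin d) (Fin m) ℝ) (hZdef : Z = U * Matrix.diagonal σ * Vᵀ) :
    ((m : ℝ)⁻¹) • (N * Nᵀ) = (1 : Matrix (Fin d) (Fin d) ℝ) ∧
    (((m : ℝ)⁻¹) • (Z * Zᵀ)).PosDef ∧
    zcaWhiten Z = N ∧
    frobSq (zcaWhiten Z - N) = 0 ∧
    ∀ Z' : Matrix (Fin d) (Fin m) ℝ, 0 ≤ frobSq (zcaWhiten Z' - N) := by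
  have hm0 : (0:ℝ) < m := by exact_mod_cast hm
  have hmne : (m:ℝ) ≠ 0 := ne_of_gt hm0
  have hs0 : (0:ℝ) < Real.sqrt m := Real.sqrt_pos.mpr hm0
  have hsne : Real.sqrt m ≠ 0 := ne_of_gt hs0
  have hss : Real.sqrt m * Real.sqrt m = (m:ℝ) := Real.mul_self_sqrt (Nat.cast_nonneg m)
  have hUU : Uᵀ * U = 1 := mul_eq_one_comm.mp hU
  have hUnit : IsUnit U := ⟨⟨U, Uᵀ, hU, hUU⟩, rfl⟩
  -- N Nᵀ = m • 1
  have hNN : N * Nᵀ = (m:ℝ) • (1 : Matrix (Fin d) (Fin d) ℝ) := by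
    rw [hNdef, transpose_smul, transpose_mul, transpose_transpose, Matrix.smul_mul,
      Matrix.mul_smul, smul_smul, hss, sandwich_mul V hV U Uᵀ, hU]
  -- Z Zᵀ = U diag(σ²) Uᵀ
  have hZZ : Z * Zᵀ = U * Matrix.diagonal (fun i => σ i ^ 2) * Uᵀ := by
    rw [hZdef]
    simp only [transpose_mul, transpose_transpose, diagonal_transpose]
    rw [sandwich_mul V hV (U * Matrix.diagonal σ) _, diag_absorb U σ σ Uᵀ]
    congr 2
    ext i
    ring
  have hSig : ((m : ℝ)⁻¹) • (Z * Zᵀ)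
      = U * Matrix.diagonal (fun i => σ i ^ 2 / m) * Uᵀ := by
    have h1 : (fun i => σ i ^ 2 / (m:ℝ)) = (m:ℝ)⁻¹ • fun i => σ i ^ 2 :=
      funext fun i => by simp [div_eq_inv_mul]
    rw [hZZ, h1, Matrix.diagonal_smul, Matrix.mul_smul, Matrix.smul_mul]
  set S : Matrix (Fin d) (Fin d) ℝ := U * Matrix.diagonal (fun i => σ i / Real.sqrt m) * Uᵀ
    with hSdef
  have hSpsd : S.PosSemidef := by
    have h1 : (Matrix.diagonal (fun i => σ i / Real.sqrt m)).PosSemidef :=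
      posSemidef_diagonal_iff.mpr fun i => le_of_lt (div_pos (hσ i) hs0)
    have := h1.mul_mul_conjTranspose_same U
    rwa [conjTranspose_eq_transpose_of_trivial] at this
  have hSsq : S ^ 2 = ((m : ℝ)⁻¹) • (Z * Zᵀ) := by
    rw [pow_two, hSdef, hSig, sandwich_mul' U hUU (U * Matrix.diagonal _) _ _, diag_absorb]
    have hfg : (fun i => σ i / Real.sqrt m * (σ i / Real.sqrt m))
        = fun i => σ i ^ 2 / (m:ℝ) := funext fun i => by
      rw [div_mul_div_comm, hss]
      ring_nf
    rw [hfg]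
  have hsqrt : (cov_posSemidef Z).sqrt = S :=
    (by
      have hA := cov_posSemidef Z
      have e1 : (cov_posSemidef Z).sqrt = hA.1.cfc Real.sqrt := by
        simp only [Matrix.PosSemidef.sqrt, IsHermitian.cfc, Unitary.conjStarAlgAut_apply]
      open scoped MatrixOrder in
      rw [e1, ← hA.1.cfc_eq, ← cfcₙ_eq_cfc (hf0 := Real.sqrt_zero),
        ← CFC.sqrt_eq_real_sqrt _ hA.nonneg]
      open scoped MatrixOrder in
      exact CFC.sqrt_unique (by rw [← pow_two]; exact hSsq) hSpsd.nonneg)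
  have hSinv : S⁻¹ = U * Matrix.diagonal (fun i => Real.sqrt m / σ i) * Uᵀ := by
    apply inv_eq_right_inv
    rw [hSdef, sandwich_mul' U hUU (U * Matrix.diagonal _) _ _, diag_absorb]
    have h1 : (fun i => σ i / Real.sqrt m * (Real.sqrt m / σ i)) = fun _ : Fin d => (1:ℝ) := by
      ext i
      rw [div_mul_div_comm, mul_comm (σ i),
        div_self (ne_of_gt (mul_pos hs0 (hσ i)))]
    rw [h1, diagonal_one, Matrix.mul_one, hU]
  have hwhiten : zcaWhiten Z = N := by
    rw [zcaWhiten, hsqrt, hSinv, hZdef, hNdef,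
      sandwich_mul' U hUU (U * Matrix.diagonal _) _ _, diag_absorb]
    have h1 : (fun i => Real.sqrt m / σ i * σ i) = fun _ : Fin d => Real.sqrt m := by
      ext i
      rw [div_mul_cancel₀ _ (ne_of_gt (hσ i))]
    rw [h1]
    have hd : Matrix.diagonal (fun _ : Fin d => Real.sqrt m)
        = Real.sqrt m • (1 : Matrix (Fin d) (Fin d) ℝ) := by
      ext i j
      by_cases h : i = j <;>
        simp [Matrix.diagonal_apply, Matrix.one_apply, h]
    rw [hd, Matrix.mul_smul, Matrix.mul_one, Matrix.smul_mul]
  refine ⟨?_, ?_, hwhiten, ?_, fun Z' => ?_⟩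
  · rw [hNN, smul_smul, inv_mul_cancel₀ hmne, one_smul]
  · rw [hSig]
    exact conj_posDef (posDef_diagonal_iff.mpr fun i => div_pos (pow_pos (hσ i) 2) hm0) hUnit
  · rw [hwhiten, sub_self]
    simp [frobSq]
  · exact Finset.sum_nonneg fun i _ => Finset.sum_nonneg fun j _ => sq_nonneg _
end

section
/- (Full-rank does not imply whitened: BW-based whitening loss imposes only a full-rank constraint.) Let m > 0, let U ∈ ℝ^{d×d} satisfy U Uᵀ = I, let V ∈ ℝ^{m×d} satisfy Vᵀ V = I, let σ : {1,…,d} → ℝ satisfy σᵢ > 0 for all i, and set Z := U · diag(σ₁,…,σ_d) · Vᵀ. Then the covariance of Z satisfies (1/m) Z Zᵀ = U · diag(σ₁²/m,…,σ_d²/m) · Uᵀ; and if the σᵢ are not all equal to √m, then (1/m) Z Zᵀ ≠ I, i.e., Z attains zero ZCA-whitening loss against the whitened target N = √m · (U Vᵀ) without itself being whitened. -/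
open Matrix

/-- Full-rank does not imply whitened: for `Z = U diag(σ) Vᵀ` with orthogonal `U`,
semi-orthogonal `V` and positive `σᵢ`, the covariance of `Z` is
`(1/m) Z Zᵀ = U diag(σᵢ²/m) Uᵀ`; and if the `σᵢ` are not all equal to `√m`, then
`(1/m) Z Zᵀ ≠ I`, i.e. `Z` attains zero ZCA-whitening loss against the whitened target
`√m • (U Vᵀ)` without itself being whitened. -/
theorem fullRank_not_whitened {d m : ℕ} (hm : 0 < m)
    (U : Matrix (Fin d) (Fin d) ℝ) (hU : U * Uᵀ = 1)
    (V : Matrix (Fin m) (Fin d) ℝ) (hV : Vᵀ * V = 1)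
    (σ : Fin d → ℝ) (hσ : ∀ i, 0 < σ i)
    (Z : Matrix (Fin d) (Fin m) ℝ) (hZdef : Z = U * Matrix.diagonal σ * Vᵀ) :
    ((m : ℝ)⁻¹) • (Z * Zᵀ) = U * Matrix.diagonal (fun i => σ i ^ 2 / m) * Uᵀ ∧
    ((∃ i, σ i ≠ Real.sqrt m) →
      ((m : ℝ)⁻¹) • (Z * Zᵀ) ≠ (1 : Matrix (Fin d) (Fin d) ℝ)) := by
  have hUU : Uᵀ * U = 1 := mul_eq_one_comm.mp hU
  have hZZ : Z * Zᵀ = U * Matrix.diagonal (fun i => σ i ^ 2) * Uᵀ := by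
    subst hZdef
    simp only [Matrix.transpose_mul, Matrix.transpose_transpose, Matrix.diagonal_transpose]
    calc U * Matrix.diagonal σ * Vᵀ * (V * (Matrix.diagonal σ * Uᵀ))
        = U * Matrix.diagonal σ * (Vᵀ * V) * (Matrix.diagonal σ * Uᵀ) := by
          simp only [Matrix.mul_assoc]
      _ = U * Matrix.diagonal (fun i => σ i ^ 2) * Uᵀ := by
          rw [hV, Matrix.mul_one, Matrix.mul_assoc, ← Matrix.mul_assoc (Matrix.diagonal σ),
            Matrix.diagonal_mul_diagonal]
          simp [Matrix.mul_assoc, sq]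
  have hmain : ((m : ℝ)⁻¹) • (Z * Zᵀ) = U * Matrix.diagonal (fun i => σ i ^ 2 / m) * Uᵀ := by
    rw [hZZ]
    have : Matrix.diagonal (fun i => σ i ^ 2 / m) =
        ((m : ℝ)⁻¹) • Matrix.diagonal (fun i => σ i ^ 2) := by
      ext j k
      by_cases hjk : j = k <;> simp [Matrix.diagonal, hjk, div_eq_inv_mul]
    rw [this]
    simp [Matrix.mul_smul, Matrix.smul_mul]
  refine ⟨hmain, ?_⟩
  rintro ⟨i, hi⟩ h
  rw [hmain] at h
  have hm0 : (m : ℝ) ≠ 0 := Nat.cast_ne_zero.mpr hm.ne'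
  have hD : Matrix.diagonal (fun i => σ i ^ 2 / m) = 1 := by
    calc Matrix.diagonal (fun i => σ i ^ 2 / (m:ℝ))
        = 1 * Matrix.diagonal (fun i => σ i ^ 2 / (m:ℝ)) * 1 := by simp
      _ = (Uᵀ * U) * Matrix.diagonal (fun i => σ i ^ 2 / (m:ℝ)) * (Uᵀ * U) := by rw [hUU]
      _ = Uᵀ * (U * Matrix.diagonal (fun i => σ i ^ 2 / (m:ℝ)) * Uᵀ) * U := by
          simp [Matrix.mul_assoc]
      _ = Uᵀ * 1 * U := by rw [h]
      _ = 1 := by rw [Matrix.mul_one, hUU]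
  have := congrFun (congrFun hD i) i
  simp [Matrix.one_apply] at this
  have : σ i ^ 2 = m := by field_simp at this; linarith
  apply hi
  rw [show σ i = Real.sqrt (σ i ^ 2) by rw [Real.sqrt_sq (hσ i).le], this]
end
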